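/- With the T-TBS sample-size Markov chain started at C_0 = n and generating function m_t(s) = E[s^{C_t}], one has m_t(s) = (p^t(s−1)+1)^n · ∏_{j=0}^{t−1} G(q p^j (s−1) + 1) for all s > 0, where G(u) = E[u^B] is the common probability generating function of the batch sizes. -/

import Mathlib

open MeasureTheory

/-- The probability that a `Binomial (k, r)` random variable equals `i`. -/
noncomputable def binomPMF (r : ℝ) (k i : ℕ) : ℝ :=
  if i ≤ k then (k.choose i : ℝ) * r ^ i * (1 - r) ^ (k - i) else 0

open ENNReal

lemma lint_nat {Ω : Type*} [MeasurableSpace Ω] (μ : Measure Ω) (f : Ω → ℕ)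
    (hf : Measurable f) (g : ℕ → ℝ≥0∞) :
    ∫⁻ ω, g (f ω) ∂μ = ∑' k, g k * μ {ω | f ω = k} := by
  have hg : Measurable g := measurable_from_top
  rw [← lintegral_map hg hf, lintegral_countable']
  congr 1; ext k
  rw [Measure.map_apply hf (measurableSet_singleton k)]
  rfl

lemma tsum_fiber_one {Ω : Type*} [MeasurableSpace Ω] (μ : Measure Ω) [IsProbabilityMeasure μ]
    (f : Ω → ℕ) (hf : Measurable f) : ∑' k, μ {ω | f ω = k} = 1 := by
  have h := lint_nat μ f hf (fun _ => 1)
  simpa using h.symm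

lemma binomPMF_nonneg {r : ℝ} (hr0 : 0 ≤ r) (hr1 : r ≤ 1) (k i : ℕ) :
    0 ≤ binomPMF r k i := by
  unfold binomPMF
  split
  · have : (0:ℝ) ≤ 1 - r := by linarith
    positivity
  · exact le_refl 0

lemma binom_pgf (r s : ℝ) (hr0 : 0 ≤ r) (hr1 : r ≤ 1) (hs : 0 ≤ s) (k : ℕ) :
    ∑' i, ENNReal.ofReal (binomPMF r k i) * ENNReal.ofReal (s ^ i)
      = ENNReal.ofReal ((r * s + (1 - r)) ^ k) := by
  have h0 : ∀ i ∉ Finset.range (k+1),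
      ENNReal.ofReal (binomPMF r k i) * ENNReal.ofReal (s ^ i) = 0 := by
    intro i hi
    have : ¬ i ≤ k := by simpa [Nat.lt_succ_iff] using hi
    simp [binomPMF, this]
  rw [tsum_eq_sum h0]
  have hterm : ∀ i ∈ Finset.range (k+1),
      ENNReal.ofReal (binomPMF r k i) * ENNReal.ofReal (s ^ i)
        = ENNReal.ofReal (binomPMF r k i * s ^ i) := by
    intro i _
    rw [ENNReal.ofReal_mul (binomPMF_nonneg hr0 hr1 k i)]
  rw [Finset.sum_congr rfl hterm, ← ENNReal.ofReal_sum_of_nonneg]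
  · congr 1
    rw [add_pow]
    refine Finset.sum_congr rfl ?_
    intro i hi
    have hik : i ≤ k := by simpa [Nat.lt_succ_iff] using hi
    simp only [binomPMF, if_pos hik]
    ring_nf
  · intro i _
    exact mul_nonneg (binomPMF_nonneg hr0 hr1 k i) (pow_nonneg hs i)

lemma fiber_measure {Ω ι : Type*} [MeasurableSpace Ω] (μ : Measure Ω) [IsProbabilityMeasure μ]
    [Countable ι] (D : Ω → ℕ) (hD : Measurable D) (E : ι → Set Ω) (π : ι → ℕ)
    (hmem : ∀ ω v, ω ∈ E v → D ω = π v) (hcov : ∀ ω, ∃ v, ω ∈ E v)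
    (htot : ∑' v, μ (E v) = 1) (c : ℕ) :
    μ {ω | D ω = c} = ∑' v, if π v = c then μ (E v) else 0 := by
  classical
  have h1 : μ {ω | D ω = c} ≤ ∑' v, (if π v = c then μ (E v) else 0) := by
    have hsub : {ω | D ω = c} ⊆ ⋃ v, (if π v = c then E v else ∅) := by
      intro ω hω
      obtain ⟨v, hv⟩ := hcov ω
      have hc : π v = c := (hmem ω v hv) ▸ hω
      exact Set.mem_iUnion.2 ⟨v, by simp [hc, hv]⟩
    calc μ {ω | D ω = c} ≤ μ (⋃ v, (if π v = c then E v else ∅)) := measure_mono hsub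
      _ ≤ ∑' v, μ (if π v = c then E v else ∅) := measure_iUnion_le _
      _ = ∑' v, if π v = c then μ (E v) else 0 := by
          apply tsum_congr; intro v; split <;> simp
  have h2 : μ {ω | D ω = c}ᶜ ≤ ∑' v, (if π v = c then 0 else μ (E v)) := by
    have hsub : {ω | D ω = c}ᶜ ⊆ ⋃ v, (if π v = c then ∅ else E v) := by
      intro ω hω
      obtain ⟨v, hv⟩ := hcov ω
      have hc : π v ≠ c := by
        intro h
        exact hω (by simpa [Set.mem_setOf_eq, h] using hmem ω v hv)
      exact Set.mem_iUnion.2 ⟨v, by simp [hc, hv]⟩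
    calc μ _ ≤ μ (⋃ v, (if π v = c then ∅ else E v)) := measure_mono hsub
      _ ≤ ∑' v, μ (if π v = c then ∅ else E v) := measure_iUnion_le _
      _ = ∑' v, if π v = c then 0 else μ (E v) := by
          apply tsum_congr; intro v; split <;> simp
  have hsplit : (∑' v, if π v = c then μ (E v) else 0)
      + (∑' v, if π v = c then 0 else μ (E v)) = 1 := by
    rw [← ENNReal.tsum_add, ← htot]
    apply tsum_congr; intro v; split <;> simp
  have hmeas : MeasurableSet {ω | D ω = c} := hD (measurableSet_singleton c)
  have hDc : μ {ω | D ω = c} + μ {ω | D ω = c}ᶜ = 1 := by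
    rw [measure_add_measure_compl hmeas]; exact measure_univ
  refine le_antisymm h1 ?_
  have key : (∑' v, if π v = c then μ (E v) else 0) + μ {ω | D ω = c}ᶜ
      ≤ μ {ω | D ω = c} + μ {ω | D ω = c}ᶜ := by
    rw [hDc]
    calc _ ≤ (∑' v, if π v = c then μ (E v) else 0)
        + (∑' v, if π v = c then 0 else μ (E v)) := add_le_add (le_refl _) h2
      _ = 1 := hsplit
  exact (ENNReal.add_le_add_iff_right (measure_ne_top μ _)).1 key

lemma tsum_fiber_collect {ι : Type*} (f : ι → ℝ≥0∞) (π : ι → ℕ) (g : ℕ → ℝ≥0∞) :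
    ∑' c, g c * ∑' v, (if π v = c then f v else 0) = ∑' v, g (π v) * f v := by
  classical
  calc ∑' c, g c * ∑' v, (if π v = c then f v else 0)
      = ∑' c, ∑' v, (if π v = c then g c * f v else 0) := by
        apply tsum_congr; intro c
        rw [← ENNReal.tsum_mul_left]
        apply tsum_congr; intro v; split <;> simp
    _ = ∑' v, ∑' c, (if π v = c then g c * f v else 0) := ENNReal.tsum_comm
    _ = ∑' v, g (π v) * f v := by
        apply tsum_congr; intro v
        rw [tsum_eq_single (π v)]
        · simp
        · intro c hc; simp [Ne.symm hc]
lemma tsum_tsum_const_mul (c : ℝ≥0∞) (a b : ℕ → ℝ≥0∞) :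
    ∑' (i) (j), c * (a i * b j) = c * ((∑' i, a i) * (∑' j, b j)) := by
  have h1 : ∀ i, ∑' j, c * (a i * b j) = (c * a i) * ∑' j, b j := by
    intro i
    rw [← ENNReal.tsum_mul_left]
    exact tsum_congr fun j => by ring
  calc ∑' (i) (j), c * (a i * b j)
      = ∑' i, (c * a i) * ∑' j, b j := tsum_congr h1
    _ = (∑' i, c * a i) * ∑' j, b j := ENNReal.tsum_mul_right
    _ = c * ((∑' i, a i) * (∑' j, b j)) := by rw [ENNReal.tsum_mul_left, mul_assoc]

lemma step_lemma {Ω : Type*} [MeasurableSpace Ω] (μ : Measure Ω) [IsProbabilityMeasure μ]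
    (p q : ℝ) (hp : 0 < p) (hp1 : p < 1) (hq0 : 0 < q) (hq1 : q ≤ 1)
    (Ct B1 Bt Rt At Ct1 : Ω → ℕ)
    (hmCt : Measurable Ct) (hmCt1 : Measurable Ct1) (hmB1 : Measurable B1)
    (hsum : ∀ ω, Ct1 ω = Rt ω + At ω)
    (hbinom : ∀ k m i j, μ {ω | Ct ω = k ∧ Bt ω = m ∧ Rt ω = i ∧ At ω = j}
        = μ {ω | Ct ω = k ∧ Bt ω = m} * ENNReal.ofReal (binomPMF p k i * binomPMF q m j))
    (hBind : ∀ k m, μ {ω | Ct ω = k ∧ Bt ω = m} = μ {ω | Ct ω = k} * μ {ω | Bt ω = m})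
    (hBiid : ∀ m, μ {ω | Bt ω = m} = μ {ω | B1 ω = m})
    (s : ℝ) (hs : 0 < s) :
    ∫⁻ ω, ENNReal.ofReal (s ^ Ct1 ω) ∂μ
      = (∫⁻ ω, ENNReal.ofReal ((p * (s - 1) + 1) ^ Ct ω) ∂μ)
        * ∫⁻ ω, ENNReal.ofReal ((q * (s - 1) + 1) ^ B1 ω) ∂μ := by
  classical
  have hp0 : (0:ℝ) ≤ p := le_of_lt hp
  have hq0' : (0:ℝ) ≤ q := le_of_lt hq0
  have hs0 : (0:ℝ) ≤ s := le_of_lt hs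
  set E : ℕ × ℕ × ℕ × ℕ → Set Ω :=
    fun v => {ω | Ct ω = v.1 ∧ Bt ω = v.2.1 ∧ Rt ω = v.2.2.1 ∧ At ω = v.2.2.2} with hE
  set π : ℕ × ℕ × ℕ × ℕ → ℕ := fun v => v.2.2.1 + v.2.2.2 with hπ
  have hpgfp : ∀ k, ∑' i, ENNReal.ofReal (binomPMF p k i) * ENNReal.ofReal (s ^ i)
      = ENNReal.ofReal ((p * s + (1 - p)) ^ k) := binom_pgf p s hp0 (le_of_lt hp1) hs0
  have hpgfq : ∀ m, ∑' j, ENNReal.ofReal (binomPMF q m j) * ENNReal.ofReal (s ^ j)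
      = ENNReal.ofReal ((q * s + (1 - q)) ^ m) := binom_pgf q s hq0' hq1 hs0
  have hpgfp1 : ∀ k, ∑' i, ENNReal.ofReal (binomPMF p k i) = 1 := by
    intro k
    have := binom_pgf p 1 hp0 (le_of_lt hp1) zero_le_one k
    simpa using this
  have hpgfq1 : ∀ m, ∑' j, ENNReal.ofReal (binomPMF q m j) = 1 := by
    intro m
    have := binom_pgf q 1 hq0' hq1 zero_le_one m
    simpa using this
  have hEval : ∀ k m i j, μ (E (k, m, i, j))
      = μ {ω | Ct ω = k ∧ Bt ω = m}
        * (ENNReal.ofReal (binomPMF p k i) * ENNReal.ofReal (binomPMF q m j)) := by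
    intro k m i j
    have hrfl : E (k, m, i, j) = {ω | Ct ω = k ∧ Bt ω = m ∧ Rt ω = i ∧ At ω = j} := rfl
    rw [hrfl, hbinom k m i j, ENNReal.ofReal_mul (binomPMF_nonneg hp0 (le_of_lt hp1) k i)]
  have htot : ∑' v, μ (E v) = 1 := by
    rw [ENNReal.tsum_prod']
    have hk : ∀ k, (∑' (w : ℕ × ℕ × ℕ), μ (E (k, w))) = μ {ω | Ct ω = k} := by
      intro k
      rw [ENNReal.tsum_prod']
      have hm : ∀ m, (∑' (u : ℕ × ℕ), μ (E (k, m, u))) = μ {ω | Ct ω = k ∧ Bt ω = m} := by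
        intro m
        rw [ENNReal.tsum_prod']
        calc ∑' (i) (j), μ (E (k, m, i, j))
            = ∑' (i) (j), μ {ω | Ct ω = k ∧ Bt ω = m}
                * (ENNReal.ofReal (binomPMF p k i) * ENNReal.ofReal (binomPMF q m j)) := by
              apply tsum_congr; intro i; apply tsum_congr; intro j
              exact hEval k m i j
          _ = μ {ω | Ct ω = k ∧ Bt ω = m}
                * ((∑' i, ENNReal.ofReal (binomPMF p k i))
                  * (∑' j, ENNReal.ofReal (binomPMF q m j))) := tsum_tsum_const_mul _ _ _
          _ = μ {ω | Ct ω = k ∧ Bt ω = m} := by rw [hpgfp1, hpgfq1]; simp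
      calc (∑' m, ∑' (u : ℕ × ℕ), μ (E (k, m, u)))
          = ∑' m, μ {ω | Ct ω = k} * μ {ω | B1 ω = m} := by
            apply tsum_congr; intro m; rw [hm m, hBind k m, hBiid m]
        _ = μ {ω | Ct ω = k} * ∑' m, μ {ω | B1 ω = m} := ENNReal.tsum_mul_left
        _ = μ {ω | Ct ω = k} := by rw [tsum_fiber_one μ B1 hmB1, mul_one]
    calc (∑' k, ∑' (w : ℕ × ℕ × ℕ), μ (E (k, w))) = ∑' k, μ {ω | Ct ω = k} :=
          tsum_congr hk
      _ = 1 := tsum_fiber_one μ Ct hmCt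
  have hmem : ∀ ω v, ω ∈ E v → Ct1 ω = π v := by
    intro ω v hv
    obtain ⟨_, _, hR, hA⟩ := hv
    simp only [hπ, ← hR, ← hA]
    exact hsum ω
  have hcov : ∀ ω, ∃ v, ω ∈ E v := by
    intro ω
    exact ⟨(Ct ω, Bt ω, Rt ω, At ω), rfl, rfl, rfl, rfl⟩
  rw [lint_nat μ Ct1 hmCt1 (fun c => ENNReal.ofReal (s ^ c))]
  have hfib := fiber_measure μ Ct1 hmCt1 E π hmem hcov htot
  calc ∑' c, ENNReal.ofReal (s ^ c) * μ {ω | Ct1 ω = c}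
      = ∑' c, ENNReal.ofReal (s ^ c) * ∑' v, (if π v = c then μ (E v) else 0) := by
        apply tsum_congr; intro c; rw [hfib c]
    _ = ∑' v, ENNReal.ofReal (s ^ π v) * μ (E v) :=
        tsum_fiber_collect (fun v => μ (E v)) π (fun c => ENNReal.ofReal (s ^ c))
    _ = ∑' k, (μ {ω | Ct ω = k} * ENNReal.ofReal ((p * s + (1 - p)) ^ k))
          * ∑' m, (μ {ω | B1 ω = m} * ENNReal.ofReal ((q * s + (1 - q)) ^ m)) := by
        rw [ENNReal.tsum_prod']
        apply tsum_congr; intro k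
        rw [ENNReal.tsum_prod', ← ENNReal.tsum_mul_left]
        apply tsum_congr; intro m
        rw [ENNReal.tsum_prod']
        calc (∑' (i) (j), ENNReal.ofReal (s ^ π (k, m, i, j)) * μ (E (k, m, i, j)))
            = ∑' (i) (j), (μ {ω | Ct ω = k} * μ {ω | B1 ω = m})
                * ((ENNReal.ofReal (binomPMF p k i) * ENNReal.ofReal (s ^ i))
                  * (ENNReal.ofReal (binomPMF q m j) * ENNReal.ofReal (s ^ j))) := by
              apply tsum_congr; intro i; apply tsum_congr; intro j
              rw [hEval k m i j, hBind k m, hBiid m]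
              have hss : ENNReal.ofReal (s ^ π (k, m, i, j))
                  = ENNReal.ofReal (s ^ i) * ENNReal.ofReal (s ^ j) := by
                rw [← ENNReal.ofReal_mul (pow_nonneg hs0 i), ← pow_add]
              rw [hss]; ring
          _ = (μ {ω | Ct ω = k} * μ {ω | B1 ω = m})
                * ((∑' i, ENNReal.ofReal (binomPMF p k i) * ENNReal.ofReal (s ^ i))
                  * (∑' j, ENNReal.ofReal (binomPMF q m j) * ENNReal.ofReal (s ^ j))) :=
              tsum_tsum_const_mul _ _ _
          _ = (μ {ω | Ct ω = k} * ENNReal.ofReal ((p * s + (1 - p)) ^ k))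
                * (μ {ω | B1 ω = m} * ENNReal.ofReal ((q * s + (1 - q)) ^ m)) := by
              rw [hpgfp k, hpgfq m]; ring
    _ = (∫⁻ ω, ENNReal.ofReal ((p * (s - 1) + 1) ^ Ct ω) ∂μ)
        * ∫⁻ ω, ENNReal.ofReal ((q * (s - 1) + 1) ^ B1 ω) ∂μ := by
        rw [lint_nat μ Ct hmCt (fun k => ENNReal.ofReal ((p * (s - 1) + 1) ^ k)),
          lint_nat μ B1 hmB1 (fun m => ENNReal.ofReal ((q * (s - 1) + 1) ^ m))]
        have e1 : p * (s - 1) + 1 = p * s + (1 - p) := by ring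
        have e2 : q * (s - 1) + 1 = q * s + (1 - q) := by ring
        rw [e1, e2, ENNReal.tsum_mul_right]
        congr 1 <;> exact tsum_congr fun k => mul_comm _ _

/-- For the T-TBS sample-size chain started at `C_0 = n`, the generating
function `m_t(s) = E[s ^ C_t]` satisfies
`m_t(s) = (p^t (s - 1) + 1)^n * ∏_{j=0}^{t-1} G (q p^j (s - 1) + 1)` for all `s > 0`,
where `G(u) = E[u ^ B]` is the common probability generating function of the batch sizes
(all expectations taken in `[0, ∞]`). -/
theorem ttbs_generating_function
    {Ω : Type*} [MeasurableSpace Ω] (μ : Measure Ω) [IsProbabilityMeasure μ]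
    (p q b : ℝ) (n : ℕ)
    (hp : 0 < p) (hp1 : p < 1) (hq0 : 0 < q) (hq1 : q ≤ 1) (hb : 0 < b)
    (hbq : b * q = (n : ℝ) * (1 - p))
    (C B R A : ℕ → Ω → ℕ)
    (hmC : ∀ t, Measurable (C t)) (hmB : ∀ t, Measurable (B t))
    (hC0 : ∀ ω, C 0 ω = n)
    (hsum : ∀ t ω, C (t + 1) ω = R (t + 1) ω + A (t + 1) ω)
    (hbinom : ∀ t k m i j,
      μ {ω | C t ω = k ∧ B (t + 1) ω = m ∧ R (t + 1) ω = i ∧ A (t + 1) ω = j}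
        = μ {ω | C t ω = k ∧ B (t + 1) ω = m}
          * ENNReal.ofReal (binomPMF p k i * binomPMF q m j))
    (hBind : ∀ t k m, μ {ω | C t ω = k ∧ B (t + 1) ω = m}
        = μ {ω | C t ω = k} * μ {ω | B (t + 1) ω = m})
    (hBiid : ∀ t m, μ {ω | B (t + 1) ω = m} = μ {ω | B 1 ω = m})
    : ∀ (t : ℕ) (s : ℝ), 0 < s →
      ∫⁻ ω, ENNReal.ofReal (s ^ C t ω) ∂μ
        = (ENNReal.ofReal (p ^ t * (s - 1) + 1)) ^ n
          * ∏ j ∈ Finset.range t,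
              ∫⁻ ω, ENNReal.ofReal ((q * p ^ j * (s - 1) + 1) ^ B 1 ω) ∂μ := by
  
  intro t
  induction t with
  | zero =>
    intro s hs
    have h1 : ∀ ω, ENNReal.ofReal (s ^ C 0 ω) = ENNReal.ofReal (s ^ n) := fun ω => by
      rw [hC0 ω]
    rw [lintegral_congr h1, lintegral_const, measure_univ, mul_one]
    simp only [pow_zero, Finset.range_zero, Finset.prod_empty, mul_one, one_mul]
    rw [show s - 1 + 1 = s by ring, ENNReal.ofReal_pow hs.le]
  | succ t ih =>
    intro s hs
    have hs' : 0 < p * (s - 1) + 1 := by nlinarith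
    have hstep := step_lemma μ p q hp hp1 hq0 hq1 (C t) (B 1) (B (t+1)) (R (t+1))
      (A (t+1)) (C (t+1)) (hmC t) (hmC (t+1)) (hmB 1) (hsum t) (hbinom t) (hBind t)
      (hBiid t) s hs
    rw [hstep, ih _ hs']
    have e1 : p ^ t * (p * (s - 1) + 1 - 1) + 1 = p ^ (t + 1) * (s - 1) + 1 := by ring
    have e2 : ∀ j : ℕ, q * p ^ j * (p * (s - 1) + 1 - 1) + 1
        = q * p ^ (j + 1) * (s - 1) + 1 := fun j => by ring
    have e0 : q * (s - 1) + 1 = q * p ^ (0:ℕ) * (s - 1) + 1 := by ring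
    rw [e1]
    simp only [e2, e0]
    rw [Finset.prod_range_succ']
    ring
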